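/- Let R be a commutative ring. For subtractive ideals I, J of the semiring fgId(R), define I × J := ⟨IJ⟩_k, the subtractive closure of the set of finite sums a₁b₁ + ⋯ + aₙbₙ with aᵢ ∈ I, bᵢ ∈ J. Then: (i) I × (J + K) = I × J + I × K for all subtractive ideals I, J, K of fgId(R); (ii) the bijection ũ : Id(R) → Id_k(fgId(R)), I ↦ ⟨u_R(I)⟩_k, satisfies ũ(IJ) = ũ(I) × ũ(J) for all ideals I, J of R. In particular ũ is a semiring isomorphism from (Id(R), +, ·) onto (Id_k(fgId(R)), +, ×). -/

import Mathlib

/-- The type of finitely generated ideals of a commutative ring `R`. -/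
def FGIdeal (R : Type*) [CommRing R] : Type _ := {I : Ideal R // I.FG}

namespace FGIdeal

variable {R : Type*} [CommRing R]

instance : Zero (FGIdeal R) := ⟨⟨⊥, Submodule.fg_bot⟩⟩

instance : One (FGIdeal R) := ⟨⟨1, ⟨{1}, by simp [Ideal.one_eq_top]⟩⟩⟩

instance : Add (FGIdeal R) :=
  ⟨fun I J => ⟨I.1 + J.1, by rw [Submodule.add_eq_sup]; exact Submodule.FG.sup I.2 J.2⟩⟩

instance : Mul (FGIdeal R) := ⟨fun I J => ⟨I.1 * J.1, Submodule.FG.mul I.2 J.2⟩⟩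

instance : SMul ℕ (FGIdeal R) :=
  ⟨fun n I => ⟨n • I.1, by
    induction n with
    | zero => simp; exact Submodule.fg_bot
    | succ n ih => rw [succ_nsmul, Submodule.add_eq_sup]; exact Submodule.FG.sup ih I.2⟩⟩

instance : Pow (FGIdeal R) ℕ := ⟨fun I n => ⟨I.1 ^ n, Submodule.FG.pow I.2 n⟩⟩

instance : NatCast (FGIdeal R) :=
  ⟨fun n => ⟨(n : Ideal R), by
    induction n with
    | zero => simp; exact Submodule.fg_bot
    | succ n ih =>
        rw [Nat.cast_succ, Submodule.add_eq_sup]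
        exact Submodule.FG.sup ih ⟨{1}, by simp [Ideal.one_eq_top]⟩⟩⟩

instance : CommSemiring (FGIdeal R) :=
  Subtype.val_injective.commSemiring (fun I : FGIdeal R => I.1) rfl rfl
    (fun _ _ => rfl) (fun _ _ => rfl) (fun _ _ => rfl) (fun _ _ => rfl) (fun _ => rfl)

end FGIdeal

variable {R : Type*} [CommRing R]

/-- The universal integral seminorm `u_R : R → fgId(R)`, `a ↦ R·a`. -/
def uRfg (a : R) : FGIdeal R := ⟨Ideal.span {a}, Submodule.fg_span_singleton a⟩
section SemiringIdeals

variable {S : Type*} [CommSemiring S]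

/-- A subset of a commutative semiring which is an ideal: it contains `0` and is closed
under addition and under multiplication by arbitrary elements. -/
def IsIdealSet (I : Set S) : Prop :=
  (0 : S) ∈ I ∧ (∀ a ∈ I, ∀ b ∈ I, a + b ∈ I) ∧ ∀ (c : S), ∀ a ∈ I, c * a ∈ I

/-- A subset `I` is subtractive if `a + b ∈ I` and `a ∈ I` imply `b ∈ I`. -/
def IsSubtractiveSet (I : Set S) : Prop :=
  ∀ a b : S, a + b ∈ I → a ∈ I → b ∈ I

/-- A `k`-ideal (subtractive ideal) of a commutative semiring. -/
def IsKIdeal (I : Set S) : Prop := IsIdealSet I ∧ IsSubtractiveSet I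

/-- The smallest subtractive ideal containing a subset `X`. -/
def kClosure (X : Set S) : Set S := ⋂₀ {J : Set S | IsKIdeal J ∧ X ⊆ J}

/-- The smallest ideal containing a subset `X`. -/
def idealGen (X : Set S) : Set S := ⋂₀ {J : Set S | IsIdealSet J ∧ X ⊆ J}

/-- An ideal of a commutative semiring is prime when its complement is multiplicatively
closed: `1 ∉ I` and `a * b ∈ I` implies `a ∈ I` or `b ∈ I`. -/
def IsPrimeSet (I : Set S) : Prop :=
  (1 : S) ∉ I ∧ ∀ a b : S, a * b ∈ I → a ∈ I ∨ b ∈ I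

end SemiringIdeals

/-- The map `Id(R) → Id_k(fgId(R))`, `I ↦ ⟨u_R(I)⟩_k`. -/
def uRtilde {R : Type*} [CommRing R] (I : Ideal R) : Set (FGIdeal R) :=
  kClosure (uRfg '' (I : Set R))

/-- The sum of two subtractive ideals in `Id_k`: the subtractive closure of the set of
elementwise sums. -/
def addK {S : Type*} [CommSemiring S] (A B : Set S) : Set S :=
  kClosure {x : S | ∃ a ∈ A, ∃ b ∈ B, x = a + b}

/-- The product `I × J := ⟨IJ⟩_k` of two subtractive ideals: the subtractive closure of
the set of finite sums `a₁b₁ + ⋯ + aₙbₙ` with `aᵢ ∈ I` and `bᵢ ∈ J`. -/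
def mulK {S : Type*} [CommSemiring S] (A B : Set S) : Set S :=
  kClosure {x : S | ∃ n : ℕ, 1 ≤ n ∧ ∃ a b : Fin n → S,
    (∀ i, a i ∈ A) ∧ (∀ i, b i ∈ B) ∧ x = ∑ i, a i * b i}

section Aux

variable {R' : Type*} [CommRing R']

lemma FGIdeal.val_add' (a b : FGIdeal R') : (a + b).1 = a.1 ⊔ b.1 := Submodule.add_eq_sup ..

lemma FGIdeal.val_mul' (a b : FGIdeal R') : (a * b).1 = a.1 * b.1 := rfl

/-- A `k`-ideal is downward closed. -/
lemma kIdeal_down {J : Set (FGIdeal R')} (hJ : IsKIdeal J) {x y : FGIdeal R'}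
    (hxy : (x.1 : Ideal R') ≤ y.1) (hy : y ∈ J) : x ∈ J := by
  have h : y + x = y := Subtype.ext (by rw [FGIdeal.val_add']; exact sup_eq_left.2 hxy)
  exact hJ.2 y x (by rw [h]; exact hy) hy

lemma mem_kClosure {X : Set (FGIdeal R')} {x : FGIdeal R'}
    (h : ∀ J : Set (FGIdeal R'), IsKIdeal J → X ⊆ J → x ∈ J) : x ∈ kClosure X := by
  intro J hJ; exact h J hJ.1 hJ.2

lemma kClosure_subset {X J : Set (FGIdeal R')} (hJ : IsKIdeal J) (hXJ : X ⊆ J) :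
    kClosure X ⊆ J := Set.sInter_subset_of_mem ⟨hJ, hXJ⟩

/-- If `uRfg a ∈ J` for all `a ∈ x`, then `x ∈ J`, for `J` a `k`-ideal. -/
lemma mem_of_forall_uRfg {J : Set (FGIdeal R')} (hJ : IsKIdeal J) (x : FGIdeal R')
    (h : ∀ a ∈ (x.1 : Ideal R'), uRfg a ∈ J) : x ∈ J := by
  obtain ⟨s, hs⟩ := x.2
  have key : ∀ s : Finset R', ((s : Set R') ⊆ (x.1 : Set R')) →
      ∀ y : FGIdeal R', y.1 = Ideal.span (s : Set R') → y ∈ J := by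
    intro s
    classical
    induction s using Finset.induction with
    | empty =>
        intro _ y hy
        have hy0 : y = (0 : FGIdeal R') :=
          Subtype.ext (by rw [hy, Finset.coe_empty, Ideal.span_empty]; rfl)
        rw [hy0]; exact hJ.1.1
    | @insert a s hns ih =>
        intro hsub y hy
        have ha : a ∈ (x.1 : Set R') := hsub (by simp)
        obtain ⟨z, hz1⟩ : ∃ z : FGIdeal R', z.1 = Ideal.span (s : Set R') :=
          ⟨⟨_, ⟨s, rfl⟩⟩, rfl⟩
        have h2 : z ∈ J := ih (fun b hb => hsub (by simp [hb])) z hz1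
        have h3 : uRfg a + z ∈ J := hJ.1.2.1 _ (h a ha) _ h2
        have heq : y = uRfg a + z := by
          apply Subtype.ext
          rw [hy, FGIdeal.val_add', hz1]
          show Ideal.span _ = Ideal.span {a} ⊔ Ideal.span _
          rw [← Ideal.span_union, Finset.coe_insert, Set.singleton_union]
        rw [heq]; exact h3
  exact key s (fun b hb => by rw [← hs]; exact Ideal.subset_span hb) x hs.symm

lemma isKIdeal_le (I : Ideal R') : IsKIdeal {x : FGIdeal R' | (x.1 : Ideal R') ≤ I} := by
  refine ⟨⟨?_, fun a ha b hb => ?_, fun c a ha => ?_⟩, fun a b hab _ => ?_⟩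
  · show ((0 : FGIdeal R').1 : Ideal R') ≤ I; exact bot_le
  · rw [Set.mem_setOf_eq, FGIdeal.val_add']; exact sup_le ha hb
  · exact le_trans Ideal.mul_le_right ha
  · rw [Set.mem_setOf_eq] at hab ⊢
    rw [FGIdeal.val_add'] at hab
    exact le_trans le_sup_right hab

lemma uRfg_mem_uRtilde {I : Ideal R'} {a : R'} (ha : a ∈ I) : uRfg a ∈ uRtilde I :=
  fun _ hJ => hJ.2 ⟨a, ha, rfl⟩

/-- The key structural description of `uRtilde`. -/
lemma uRtilde_eq (I : Ideal R') : uRtilde I = {x : FGIdeal R' | (x.1 : Ideal R') ≤ I} := by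
  apply subset_antisymm
  · apply kClosure_subset (isKIdeal_le I)
    rintro _ ⟨a, ha, rfl⟩
    exact (Ideal.span_singleton_le_iff_mem I).2 ha
  · intro x hx
    refine mem_kClosure fun J hJ hXJ => mem_of_forall_uRfg hJ x fun a haI => ?_
    exact hXJ ⟨a, hx haI, rfl⟩

lemma mem_uRtilde_iff {I : Ideal R'} {x : FGIdeal R'} :
    x ∈ uRtilde I ↔ (x.1 : Ideal R') ≤ I := by rw [uRtilde_eq]; rfl

lemma uRfg_mem_uRtilde_iff {I : Ideal R'} {a : R'} : uRfg a ∈ uRtilde I ↔ a ∈ I := by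
  rw [mem_uRtilde_iff]; exact Ideal.span_singleton_le_iff_mem I

def valHom : FGIdeal R' →+ Ideal R' where
  toFun := Subtype.val
  map_zero' := rfl
  map_add' _ _ := rfl

lemma uRtilde_add (I J : Ideal R') : uRtilde (I + J) = addK (uRtilde I) (uRtilde J) := by
  apply subset_antisymm
  · intro x hx
    rw [mem_uRtilde_iff] at hx
    refine mem_kClosure fun J' hJ' hXJ' => mem_of_forall_uRfg hJ' x fun g hg => ?_
    have hg' : g ∈ I + J := hx hg
    obtain ⟨a, ha, b, hb, rfl⟩ := Submodule.mem_sup.1 hg'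
    refine kIdeal_down hJ' ?_ (hXJ' ⟨uRfg a, uRfg_mem_uRtilde ha, uRfg b, uRfg_mem_uRtilde hb, rfl⟩)
    rw [FGIdeal.val_add']
    refine (Ideal.span_singleton_le_iff_mem _).2 ?_
    exact Submodule.add_mem_sup (Ideal.mem_span_singleton_self a) (Ideal.mem_span_singleton_self b)
  · rw [uRtilde_eq (I + J)]
    apply kClosure_subset (isKIdeal_le _)
    rintro _ ⟨a, ha, b, hb, rfl⟩
    rw [mem_uRtilde_iff] at ha hb
    rw [Set.mem_setOf_eq, FGIdeal.val_add']
    exact sup_le (le_trans ha le_sup_left) (le_trans hb le_sup_right)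

lemma uRtilde_mul (I J : Ideal R') : uRtilde (I * J) = mulK (uRtilde I) (uRtilde J) := by
  apply subset_antisymm
  · intro x hx
    rw [mem_uRtilde_iff] at hx
    refine mem_kClosure fun J' hJ' hXJ' => mem_of_forall_uRfg hJ' x fun g hg => ?_
    have hg' : g ∈ I * J := hx hg
    refine Submodule.mul_induction_on hg' (fun m hm n hn => ?_) (fun g₁ g₂ h₁ h₂ => ?_)
    · refine hXJ' ⟨1, le_refl 1, fun _ => uRfg m, fun _ => uRfg n,
        fun _ => uRfg_mem_uRtilde hm, fun _ => uRfg_mem_uRtilde hn, ?_⟩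
      apply Subtype.ext
      rw [Fin.sum_univ_one]
      show Ideal.span {m * n} = Ideal.span {m} * Ideal.span {n}
      rw [Ideal.span_singleton_mul_span_singleton]
    · refine kIdeal_down hJ' ?_ (hJ'.1.2.1 _ h₁ _ h₂)
      rw [FGIdeal.val_add']
      refine (Ideal.span_singleton_le_iff_mem _).2 ?_
      exact Submodule.add_mem_sup (Ideal.mem_span_singleton_self g₁)
        (Ideal.mem_span_singleton_self g₂)
  · rw [uRtilde_eq (I * J)]
    apply kClosure_subset (isKIdeal_le _)
    rintro x ⟨n, _, a, b, ha, hb, rfl⟩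
    rw [Set.mem_setOf_eq]
    have : ((∑ i, a i * b i : FGIdeal R').1 : Ideal R') = ∑ i, (a i).1 * (b i).1 :=
      map_sum valHom _ _
    rw [this]
    refine Finset.sum_induction _ (fun t => t ≤ I * J)
      (fun u v hu hv => by rw [Submodule.add_eq_sup]; exact sup_le hu hv) bot_le ?_
    intro i _
    exact mul_le_mul' (mem_uRtilde_iff.1 (ha i)) (mem_uRtilde_iff.1 (hb i))

/-- The inverse map: the ideal of `R` corresponding to a `k`-ideal of `fgId(R)`. -/
def preIdeal (Λ : Set (FGIdeal R')) (hΛ : IsKIdeal Λ) : Ideal R' where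
  carrier := {a | uRfg a ∈ Λ}
  zero_mem' := by
    have : uRfg (0 : R') = 0 := Subtype.ext (by show Ideal.span {(0:R')} = ⊥; simp)
    show uRfg (0 : R') ∈ Λ
    rw [this]; exact hΛ.1.1
  add_mem' := by
    intro a b ha hb
    refine kIdeal_down hΛ ?_ (hΛ.1.2.1 _ ha _ hb)
    rw [FGIdeal.val_add']
    refine (Ideal.span_singleton_le_iff_mem _).2 ?_
    exact Submodule.add_mem_sup (Ideal.mem_span_singleton_self a) (Ideal.mem_span_singleton_self b)
  smul_mem' := by
    intro c a ha
    have : uRfg (c • a) = uRfg c * uRfg a := by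
      apply Subtype.ext
      show Ideal.span {c • a} = Ideal.span {c} * Ideal.span {a}
      rw [Ideal.span_singleton_mul_span_singleton, smul_eq_mul]
    show uRfg (c • a) ∈ Λ
    rw [this]
    exact hΛ.1.2.2 _ _ ha

lemma uRtilde_preIdeal (Λ : Set (FGIdeal R')) (hΛ : IsKIdeal Λ) :
    uRtilde (preIdeal Λ hΛ) = Λ := by
  rw [uRtilde_eq]
  ext x
  constructor
  · intro hx
    exact mem_of_forall_uRfg hΛ x fun a ha => hx ha
  · intro hx a ha
    exact kIdeal_down hΛ ((Ideal.span_singleton_le_iff_mem _).2 ha) hx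

lemma uRtilde_injective : Function.Injective (uRtilde (R := R')) := by
  intro I J h
  ext a
  rw [← uRfg_mem_uRtilde_iff (I := I), ← uRfg_mem_uRtilde_iff (I := J), h]

end Aux

/-- The product `I × J = ⟨IJ⟩_k` on subtractive ideals of `fgId(R)`
distributes over sums, and `ũ : Id(R) → Id_k(fgId(R))`, `I ↦ ⟨u_R(I)⟩_k`, is a semiring
isomorphism from `(Id(R), +, ·)` onto `(Id_k(fgId(R)), +, ×)`. -/
theorem uRtilde_semiring_isomorphism (R : Type*) [CommRing R] :
    (∀ I J K : Set (FGIdeal R), IsKIdeal I → IsKIdeal J → IsKIdeal K →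
      mulK I (addK J K) = addK (mulK I J) (mulK I K)) ∧
    (∀ I J : Ideal R, uRtilde (I * J) = mulK (uRtilde I) (uRtilde J)) ∧
    (∀ I J : Ideal R, uRtilde (I + J) = addK (uRtilde I) (uRtilde J)) ∧
    (∀ Λ : Set (FGIdeal R), IsKIdeal Λ → ∃! I : Ideal R, uRtilde I = Λ) := by
  refine ⟨?_, fun I J => uRtilde_mul I J, fun I J => uRtilde_add I J,
    fun Λ hΛ => ⟨preIdeal Λ hΛ, uRtilde_preIdeal Λ hΛ, fun I hI =>
      uRtilde_injective (by rw [hI, uRtilde_preIdeal])⟩⟩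
  intro I J K hI hJ hK
  rw [← uRtilde_preIdeal I hI, ← uRtilde_preIdeal J hJ, ← uRtilde_preIdeal K hK,
    ← uRtilde_add, ← uRtilde_mul, ← uRtilde_mul, ← uRtilde_mul, ← uRtilde_add, mul_add]
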